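/- If a homomorphism space Hom(G,H) is single-site fillable (equivalently, every locally admissible configuration is globally admissible), then Hom(G,H) satisfies topological strong spatial mixing (TSSM) with gap 2: for all finite subsets A, B, S of V(G) with dist(A,B) ≥ 2 and configurations α on A, σ on S, β on B, if ασ and σβ are each restrictions of points of Hom(G,H), then so is ασβ. -/

import Mathlib

/-- A graph, possibly with loops: a symmetric relation on vertices. -/
structure LoopGraph (V : Type*) where
  Adj : V → V → Prop
  symm : ∀ {u v : V}, Adj u v → Adj v u

namespace LoopGraph

variable {VG VH : Type*}

/-- `G.ReachIn n x y`: there is a walk of length exactly `n` from `x` to `y`. -/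
def ReachIn (G : LoopGraph VG) : ℕ → VG → VG → Prop
  | 0, x, y => x = y
  | n + 1, x, y => ∃ z, G.Adj x z ∧ G.ReachIn n z y

/-- `dist(A, B) ≥ g`: no walk of length `< g` connects a point of `A` to a point of `B`. -/
def DistGe (G : LoopGraph VG) (A B : Set VG) (g : ℕ) : Prop :=
  ∀ x ∈ A, ∀ y ∈ B, ∀ n < g, ¬ G.ReachIn n x y

/-- A graph homomorphism from `G` to `H`. -/
def IsHom (G : LoopGraph VG) (H : LoopGraph VH) (f : VG → VH) : Prop :=
  ∀ ⦃x y : VG⦄, G.Adj x y → H.Adj (f x) (f y)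

/-- `f` is a graph homomorphism on the subgraph of `G` induced by `S` (local admissibility). -/
def IsHomOn (G : LoopGraph VG) (H : LoopGraph VH) (f : VG → VH) (S : Set VG) : Prop :=
  ∀ ⦃x⦄, x ∈ S → ∀ ⦃y⦄, y ∈ S → G.Adj x y → H.Adj (f x) (f y)

/-- The configuration `α|_A` is globally admissible: it extends to a point of `Hom(G,H)`. -/
def GlobAdm (G : LoopGraph VG) (H : LoopGraph VH) (A : Set VG) (α : VG → VH) : Prop :=
  ∃ ω : VG → VH, G.IsHom H ω ∧ ∀ x ∈ A, ω x = α x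

/-- A board: countable, simple, connected, locally finite, with at least two vertices. -/
structure IsBoard (G : LoopGraph VG) : Prop where
  countable : Countable VG
  simple : ∀ v : VG, ¬ G.Adj v v
  connected : ∀ x y : VG, ∃ n : ℕ, G.ReachIn n x y
  locallyFinite : ∀ v : VG, {w : VG | G.Adj v w}.Finite
  nontrivial : Nontrivial VG

/-- Single-site fillability of `Hom(G, H)`. -/
def SSF (G : LoopGraph VG) (H : LoopGraph VH) : Prop :=
  ∀ (x : VG) (B : Set VG), B ⊆ {y : VG | G.Adj x y} →
    ∀ β : VG → VH, G.IsHomOn H β B →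
      ∃ α : VG → VH, G.IsHomOn H α (insert x B) ∧ ∀ y ∈ B, α y = β y

/-- Topological strong spatial mixing with gap `g`. -/
def TSSM (G : LoopGraph VG) (H : LoopGraph VH) (g : ℕ) : Prop :=
  ∀ (A B S : Set VG), A.Finite → B.Finite → S.Finite → G.DistGe A B g →
    ∀ α σ β : VG → VH,
      (∃ ω, G.IsHom H ω ∧ (∀ x ∈ A, ω x = α x) ∧ (∀ x ∈ S, ω x = σ x)) →
      (∃ ω, G.IsHom H ω ∧ (∀ x ∈ S, ω x = σ x) ∧ (∀ x ∈ B, ω x = β x)) →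
      ∃ ω, G.IsHom H ω ∧ (∀ x ∈ A, ω x = α x) ∧ (∀ x ∈ S, ω x = σ x) ∧
        ∀ x ∈ B, ω x = β x

/-- Strong irreducibility with gap `g`. -/
def StrongIrred (G : LoopGraph VG) (H : LoopGraph VH) (g : ℕ) : Prop :=
  ∀ (A B : Set VG), A.Finite → B.Finite → A.Nonempty → B.Nonempty → Disjoint A B →
    G.DistGe A B g → ∀ α β : VG → VH,
      G.GlobAdm H A α → G.GlobAdm H B β →
      ∃ ω, G.IsHom H ω ∧ (∀ x ∈ A, ω x = α x) ∧ ∀ x ∈ B, ω x = β x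

end LoopGraph


/-- Key lemma: under SSF, every locally admissible configuration is globally admissible. -/
theorem aux_locAdm_globAdm {VG VH : Type} (G : LoopGraph VG) (H : LoopGraph VH)
    (hG : G.IsBoard) (hssf : G.SSF H) (F : Set VG) (α : VG → VH)
    (hα : G.IsHomOn H α F) : G.GlobAdm H F α := by
  classical
  haveI : Countable VG := hG.countable
  haveI : Nontrivial VG := hG.nontrivial
  obtain ⟨e, he⟩ := exists_surjective_nat VG
  -- one-site extension step
  have step : ∀ (S : Set VG) (f : VG → VH), G.IsHomOn H f S → ∀ x : VG,
      ∃ f', G.IsHomOn H f' (insert x S) ∧ ∀ y ∈ S, f' y = f y := by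
    intro S f hf x
    by_cases hx : x ∈ S
    · exact ⟨f, by rwa [Set.insert_eq_of_mem hx], fun y _ => rfl⟩
    · obtain ⟨f₀, hf₀, hag⟩ := hssf x {y | y ∈ S ∧ G.Adj x y} (fun y hy => hy.2) f
        (fun u hu v hv huv => hf hu.1 hv.1 huv)
      refine ⟨fun y => if y = x then f₀ x else f y, ?_, ?_⟩
      · intro u hu v hv huv
        rcases eq_or_ne u x with hux | hux <;> rcases eq_or_ne v x with hvx | hvx
        · rw [hux, hvx] at huv; exact absurd huv (hG.simple x)
        · have hvS : v ∈ S := (Set.mem_insert_iff.mp hv).resolve_left hvx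
          have huv' : G.Adj x v := hux ▸ huv
          have hvB : v ∈ {y | y ∈ S ∧ G.Adj x y} := ⟨hvS, huv'⟩
          show H.Adj (if u = x then f₀ x else f u) (if v = x then f₀ x else f v)
          rw [if_pos hux, if_neg hvx, ← hag v hvB]
          exact hf₀ (Set.mem_insert _ _) (Set.mem_insert_of_mem _ hvB) huv'
        · have huS : u ∈ S := (Set.mem_insert_iff.mp hu).resolve_left hux
          have huv' : G.Adj x u := hvx ▸ G.symm huv
          have huB : u ∈ {y | y ∈ S ∧ G.Adj x y} := ⟨huS, huv'⟩
          show H.Adj (if u = x then f₀ x else f u) (if v = x then f₀ x else f v)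
          rw [if_neg hux, if_pos hvx, ← hag u huB]
          exact H.symm (hf₀ (Set.mem_insert _ _) (Set.mem_insert_of_mem _ huB) huv')
        · show H.Adj (if u = x then f₀ x else f u) (if v = x then f₀ x else f v)
          rw [if_neg hux, if_neg hvx]
          exact hf ((Set.mem_insert_iff.mp hu).resolve_left hux)
            ((Set.mem_insert_iff.mp hv).resolve_left hvx) huv
      · intro y hy
        have : y ≠ x := fun h => hx (h ▸ hy)
        simp [this]
  choose next hnext hagree using step
  -- a total version of the step, so we can do simple recursion
  let next' : Set VG → (VG → VH) → VG → (VG → VH) := fun S f x =>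
    if h : G.IsHomOn H f S then next S f h x else f
  let g : ℕ → Set VG × (VG → VH) := fun n =>
    Nat.rec (F, α) (fun k p => (insert (e k) p.1, next' p.1 p.2 (e k))) n
  have hgs : ∀ k, g (k + 1) = (insert (e k) (g k).1, next' (g k).1 (g k).2 (e k)) :=
    fun _ => rfl
  have hinv : ∀ n, G.IsHomOn H (g n).2 (g n).1 := by
    intro n
    induction n with
    | zero => exact hα
    | succ k ih =>
      rw [hgs k]
      simp only [next', dif_pos ih]
      exact hnext _ _ _ _
  have hcoh : ∀ n, ∀ y ∈ (g n).1, (g (n + 1)).2 y = (g n).2 y := by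
    intro n y hy
    rw [hgs n]
    simp only [next', dif_pos (hinv n)]
    exact hagree _ _ _ _ y hy
  have hmono : ∀ n m, n ≤ m → (g n).1 ⊆ (g m).1 := by
    intro n m hnm
    induction hnm with
    | refl => exact subset_rfl
    | step h ih => exact ih.trans (by rw [hgs]; exact Set.subset_insert _ _)
  have hcoh' : ∀ n m, n ≤ m → ∀ y ∈ (g n).1, (g m).2 y = (g n).2 y := by
    intro n m hnm
    induction hnm with
    | refl => exact fun y _ => rfl
    | @step m h ih =>
      intro y hy
      rw [hcoh m y (hmono n m h hy), ih y hy]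
  let idx : VG → ℕ := fun x => (he x).choose
  have hidx : ∀ x, e (idx x) = x := fun x => (he x).choose_spec
  have hmem : ∀ x, x ∈ (g (idx x + 1)).1 := by
    intro x
    have h1 : (g (idx x + 1)).1 = insert (e (idx x)) (g (idx x)).1 := by rw [hgs (idx x)]
    rw [h1, hidx x]
    exact Set.mem_insert _ _
  let ω : VG → VH := fun x => (g (idx x + 1)).2 x
  have hkey : ∀ (x : VG) (m : ℕ), idx x + 1 ≤ m → (g m).2 x = ω x :=
    fun x m h => hcoh' _ m h x (hmem x)
  refine ⟨ω, ?_, ?_⟩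
  · intro x y hxy
    set m := max (idx x + 1) (idx y + 1) with hm
    have hx : x ∈ (g m).1 := hmono _ m (le_max_left _ _) (hmem x)
    have hy : y ∈ (g m).1 := hmono _ m (le_max_right _ _) (hmem y)
    have := hinv m hx hy hxy
    rwa [hkey x m (le_max_left _ _), hkey y m (le_max_right _ _)] at this
  · intro x hx
    exact hcoh' 0 (idx x + 1) (Nat.zero_le _) x hx

/-- If `Hom(G, H)` is single-site fillable, then it satisfies TSSM with gap 2. -/
theorem SSF_implies_TSSM_gap_two {VG VH : Type} [Fintype VH] (G : LoopGraph VG) (H : LoopGraph VH)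
    (hG : G.IsBoard) (hssf : G.SSF H) : G.TSSM H 2 := by
  classical
  intro A B S _hA _hB _hS hdist α σ β h1 h2
  obtain ⟨ω₁, hω₁, hω₁A, hω₁S⟩ := h1
  obtain ⟨ω₂, hω₂, hω₂S, hω₂B⟩ := h2
  have hAB_disj : ∀ x ∈ A, x ∉ B := fun x hx hxB =>
    hdist x hx x hxB 0 (by norm_num) rfl
  have hAB_adj : ∀ x ∈ A, ∀ y ∈ B, ¬ G.Adj x y := fun x hx y hy h =>
    hdist x hx y hy 1 one_lt_two ⟨y, h, rfl⟩
  set τ : VG → VH := fun x => if x ∈ B then ω₂ x else ω₁ x with hτdef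
  have hτ : G.IsHomOn H τ (A ∪ S ∪ B) := by
    intro u hu v hv huv
    by_cases hub : u ∈ B <;> by_cases hvb : v ∈ B <;>
      simp only [hτdef, if_pos, if_neg, hub, hvb, if_true, if_false]
    · exact hω₂ huv
    · have hv' : v ∈ A ∪ S := (hv.resolve_right hvb)
      rcases hv' with hvA | hvS
      · exact absurd (G.symm huv) (hAB_adj v hvA u hub)
      · rw [hω₁S v hvS, ← hω₂S v hvS]
        exact hω₂ huv
    · have hu' : u ∈ A ∪ S := (hu.resolve_right hub)
      rcases hu' with huA | huS
      · exact absurd huv (hAB_adj u huA v hvb)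
      · rw [hω₁S u huS, ← hω₂S u huS]
        exact hω₂ huv
    · exact hω₁ huv
  obtain ⟨ω, hω, hωτ⟩ := aux_locAdm_globAdm G H hG hssf (A ∪ S ∪ B) τ hτ
  refine ⟨ω, hω, ?_, ?_, ?_⟩
  · intro x hx
    rw [hωτ x (Or.inl (Or.inl hx)), hτdef]
    simp only [if_neg (hAB_disj x hx)]
    exact hω₁A x hx
  · intro x hx
    rw [hωτ x (Or.inl (Or.inr hx)), hτdef]
    by_cases hxB : x ∈ B
    · simp only [if_pos hxB]; exact hω₂S x hx
    · simp only [if_neg hxB]; exact hω₁S x hx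
  · intro x hx
    rw [hωτ x (Or.inr hx), hτdef]
    simp only [if_pos hx]
    exact hω₂B x hx
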